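/- At every point (z₁,z₂,z₃,z₄,z₅) ∈ ℂ⁵ of the complete intersection {z₁z₅ − z₄² = z₂ + z₃ and z₂z₃ − z₅² = z₁³ + 1}, the two gradient vectors (z₅, −1, −1, −2z₄, z₁) and (−3z₁², z₃, z₂, 0, −2z₅) of the defining polynomials are linearly independent over ℂ; in particular, this complete intersection is a smooth affine variety of dimension 3. -/
import Mathlib

/-- At every point of the complete intersection
`{z₁z₅ − z₄² = z₂ + z₃, z₂z₃ − z₅² = z₁³ + 1} ⊂ ℂ⁵`, the gradients
`(z₅,−1,−1,−2z₄,z₁)` and `(−3z₁²,z₃,z₂,0,−2z₅)` of the defining polynomials are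
linearly independent over `ℂ`. -/
theorem stmt19 :
    ∀ z₁ z₂ z₃ z₄ z₅ : ℂ,
      z₁ * z₅ - z₄ ^ 2 = z₂ + z₃ →
      z₂ * z₃ - z₅ ^ 2 = z₁ ^ 3 + 1 →
      ∀ a b : ℂ,
        a • ((z₅, -1, -1, -2 * z₄, z₁) : ℂ × ℂ × ℂ × ℂ × ℂ) +
            b • ((-3 * z₁ ^ 2, z₃, z₂, 0, -2 * z₅) : ℂ × ℂ × ℂ × ℂ × ℂ) = 0 →
          a = 0 ∧ b = 0 := by
  intro z₁ z₂ z₃ z₄ z₅ h1 h2 a b h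
  obtain ⟨e1, e2, e3, e4, e5⟩ :
      a * z₅ + b * (-3 * z₁ ^ 2) = 0 ∧ a * (-1) + b * z₃ = 0 ∧
      a * (-1) + b * z₂ = 0 ∧ a * (-2 * z₄) + b * 0 = 0 ∧
      a * z₁ + b * (-2 * z₅) = 0 := by
    simpa [Prod.ext_iff, smul_eq_mul] using h
  by_cases hb : b = 0
  · have ha : a = 0 := by linear_combination -e2 + z₃ * hb
    exact ⟨ha, hb⟩
  exfalso
  by_cases ha : a = 0
  · -- z₃ = 0, z₂ = 0, z₁ = 0, z₅ = 0, contradiction with h2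
    have hz3 : z₃ = 0 := by
      have := mul_left_cancel₀ hb (by linear_combination e2 + ha : b * z₃ = b * 0)
      simpa using this
    have hz2 : z₂ = 0 := by
      have := mul_left_cancel₀ hb (by linear_combination e3 + ha : b * z₂ = b * 0)
      simpa using this
    have hz1 : z₁ = 0 := by
      have h' : z₁ ^ 2 = 0 := by
        have := mul_left_cancel₀ hb (by linear_combination (-1/3 : ℂ) * e1 + (z₅/3) * ha : b * z₁ ^ 2 = b * 0)
        simpa using this
      exact pow_eq_zero_iff (n := 2) (by norm_num) |>.mp h'
    have hz5 : z₅ = 0 := by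
      have := mul_left_cancel₀ hb (by linear_combination (-1/2 : ℂ) * e5 + (z₁/2) * ha : b * z₅ = b * 0)
      simpa using this
    rw [hz1, hz2, hz3, hz5] at h2
    norm_num at h2
  -- now a ≠ 0, b ≠ 0
  have hz4 : z₄ = 0 := by
    have := mul_left_cancel₀ ha (by linear_combination (-1/2 : ℂ) * e4 : a * z₄ = a * 0)
    simpa using this
  have hz23 : z₂ = z₃ := by
    have := mul_left_cancel₀ hb (by linear_combination e3 - e2 : b * z₂ = b * z₃)
    exact this
  -- z₅ ≠ 0:
  by_cases hz5 : z₅ = 0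
  · -- e1: -3 b z₁² = 0 ⇒ z₁ = 0; h1 ⇒ 2 z₃ = 0 ⇒ z₃ = 0 ⇒ a = 0
    have hz1 : z₁ = 0 := by
      have h' : z₁ ^ 2 = 0 := by
        have := mul_left_cancel₀ hb (by linear_combination (-1/3 : ℂ) * e1 + (a/3) * hz5 : b * z₁ ^ 2 = b * 0)
        simpa using this
      exact pow_eq_zero_iff (n := 2) (by norm_num) |>.mp h'
    have hz3 : z₃ = 0 := by
      have h' : (2:ℂ) * z₃ = 0 := by
        linear_combination -h1 + z₅ * hz1 - hz23 - z₄ * hz4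
      linear_combination (1/2 : ℂ) * h'
    exact ha (by linear_combination -e2 + b * hz3)
  by_cases hz1 : z₁ = 0
  · -- e5 ⇒ 2 b z₅ = 0 ⇒ z₅ = 0 contra
    have : z₅ = 0 := by
      have := mul_left_cancel₀ hb (by linear_combination (-1/2 : ℂ) * e5 + (a/2) * hz1 : b * z₅ = b * 0)
      simpa using this
    exact hz5 this
  -- z₁ ≠ 0, z₅ ≠ 0, a ≠ 0, b ≠ 0, z₄ = 0, z₂ = z₃
  -- h1: z₁ z₅ = 2 z₃
  have E4 : z₁ * z₅ = 2 * z₃ := by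
    linear_combination h1 + hz23 + z₄ * hz4
  -- a = b z₃
  have E3 : a = b * z₃ := by linear_combination -e2
  -- 2a = b z₁ z₅
  have E3' : 2 * a = b * (z₁ * z₅) := by linear_combination 2 * E3 - b * E4
  -- e5: a z₁ = 2 b z₅ ⇒ b z₁² z₅ = 4 b z₅ ⇒ z₁² = 4
  have Hz1sq : z₁ ^ 2 = 4 := by
    have h' : b * z₅ * z₁ ^ 2 = b * z₅ * 4 := by
      linear_combination 2 * e5 - z₁ * E3'
    exact mul_left_cancel₀ (mul_ne_zero hb hz5) h'
  -- e1: a z₅ = 3 b z₁² ⇒ b z₁ z₅² = 6 b z₁² ⇒ z₅² = 6 z₁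
  have Hz5sq : z₅ ^ 2 = 6 * z₁ := by
    have h' : b * z₁ * z₅ ^ 2 = b * z₁ * (6 * z₁) := by
      linear_combination 2 * e1 - z₅ * E3'
    exact mul_left_cancel₀ (mul_ne_zero hb hz1) h'
  -- h2 with z₂ = z₃ = z₁ z₅ / 2: z₁² z₅²/4 - z₅² = z₁³ + 1, using z₁² = 4: z₁³ = -1
  have Hcube : z₁ ^ 3 = -1 := by
    linear_combination -h2 + z₃ * hz23 - ((z₁*z₅ + 2*z₃)/4) * E4 + (z₅^2/4) * Hz1sq
  -- z₁³ = 4 z₁ so z₁ = -1/4; but z₁² = 4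
  have : z₁ = -(1/4 : ℂ) := by
    linear_combination (1/4 : ℂ) * Hcube - (z₁/4) * Hz1sq
  rw [this] at Hz1sq
  norm_num at Hz1sq
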